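/- arXiv:2604.22404 — 3 statements merged into one kernel-verified Lean document; each statement's English description precedes it below -/
import Mathlib

section
/- Let R be a root system and α a maximal positive root. Set R⁺_α = {γ ∈ R⁺ : (α, γ) > 0}. If β, γ ∈ R⁺_α with β ≠ γ and β + γ a sum equal to α, then for any δ ∈ R⁺_α with δ ≠ α, the element α - δ also lies in R⁺_α; i.e. the map δ ↦ α - δ is an involution of R⁺_α \ {α}. -/
open scoped RealInnerProductSpace

/-- Let `α` be a highest root and `R⁺_α = {γ ∈ R⁺ : (α,γ) > 0}`.
If `β, γ ∈ R⁺_α` with `β ≠ γ` and `β + γ = α`, then for every `δ ∈ R⁺_α` with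
`δ ≠ α` also `α - δ ∈ R⁺_α`, i.e. `δ ↦ α - δ` is an involution of `R⁺_α \ {α}`. -/
theorem stmt_4 (E : Type*) [NormedAddCommGroup E] [InnerProductSpace ℝ E]
    (R : Finset E)
    (hR0 : (0 : E) ∉ R)
    (hRneg : ∀ β ∈ R, -β ∈ R)
    (hRint : ∀ α ∈ R, ∀ β ∈ R, ∃ n : ℤ, 2 * ⟪β, α⟫ / ⟪α, α⟫ = (n : ℝ))
    (hRrefl : ∀ α ∈ R, ∀ β ∈ R, β - (2 * ⟪β, α⟫ / ⟪α, α⟫) • α ∈ R)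
    (hRred : ∀ α ∈ R, ∀ t : ℝ, t • α ∈ R → t = 1 ∨ t = -1)
    (P : Finset E) (hPR : P ⊆ R)
    (hPneg : ∀ β ∈ R, (β ∈ P ↔ -β ∉ P))
    (hPadd : ∀ β ∈ P, ∀ γ ∈ P, β + γ ∈ R → β + γ ∈ P)
    (α : E) (hα : α ∈ P)
    (hmax : ∀ γ ∈ P, α + γ ∉ R)
    (Rpα : Finset E) (hRpα : Rpα = P.filter (fun γ => 0 < ⟪α, γ⟫))
    (β γ : E) (hβ : β ∈ Rpα) (hγ : γ ∈ Rpα) (hβγ : β ≠ γ) (hsum : β + γ = α) :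
    ∀ δ ∈ Rpα, δ ≠ α → α - δ ∈ Rpα := by
  intro δ hδ hδα
  rw [hRpα] at hδ ⊢
  obtain ⟨hδP, hp⟩ := Finset.mem_filter.mp hδ
  have hδR : δ ∈ R := hPR hδP
  have hαR : α ∈ R := hPR hα
  have hα0 : α ≠ 0 := fun h => hR0 (h ▸ hαR)
  have hδ0 : δ ≠ 0 := fun h => hR0 (h ▸ hδR)
  have ha : (0:ℝ) < ⟪α, α⟫ := by
    rw [real_inner_self_eq_norm_mul_norm]
    exact mul_pos (norm_pos_iff.mpr hα0) (norm_pos_iff.mpr hα0)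
  have hd : (0:ℝ) < ⟪δ, δ⟫ := by
    rw [real_inner_self_eq_norm_mul_norm]
    exact mul_pos (norm_pos_iff.mpr hδ0) (norm_pos_iff.mpr hδ0)
  -- Cartan integers
  obtain ⟨m, hm⟩ := hRint α hαR δ hδR
  obtain ⟨n, hn⟩ := hRint δ hδR α hαR
  have hmα : δ - (m:ℝ) • α ∈ R := by
    have := hRrefl α hαR δ hδR; rwa [hm] at this
  have hnδ : α - (n:ℝ) • δ ∈ R := by
    have := hRrefl δ hδR α hαR; rwa [hn] at this
  have hpδα : ⟪δ, α⟫ = ⟪α, δ⟫ := real_inner_comm α δ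
  have hm1 : 1 ≤ m := by
    have : (0:ℝ) < (m:ℝ) := by
      rw [← hm, hpδα]; positivity
    exact_mod_cast this
  have hn1 : 1 ≤ n := by
    have : (0:ℝ) < (n:ℝ) := by
      rw [← hn]; positivity
  -- strict Cauchy–Schwarz since δ is not parallel to α
    exact_mod_cast this
  have hnpar : ‖α‖ • δ ≠ ‖δ‖ • α := by
    intro h
    have hα' : ‖α‖ ≠ 0 := norm_ne_zero_iff.mpr hα0
    have hkey : (‖α‖⁻¹ * ‖δ‖) • α = δ := by
      rw [← smul_smul, ← h, smul_smul, inv_mul_cancel₀ hα', one_smul]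
    have hmem : (‖α‖⁻¹ * ‖δ‖) • α ∈ R := by rw [hkey]; exact hδR
    rcases hRred α hαR _ hmem with ht | ht
    · exact hδα (by rw [← hkey, ht, one_smul])
    · have : (0:ℝ) < ‖α‖⁻¹ * ‖δ‖ := by
        have := norm_pos_iff.mpr hδ0
        positivity
      rw [ht] at this; linarith
  have hCS : ⟪δ, α⟫ < ‖δ‖ * ‖α‖ := inner_lt_norm_mul_iff_real.mpr hnpar
  have hCS2 : ⟪α, δ⟫ * ⟪α, δ⟫ < ⟪α, α⟫ * ⟪δ, δ⟫ := by
    have h1 : ⟪α, δ⟫ < ‖δ‖ * ‖α‖ := by rwa [← hpδα]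
    have h2 : ⟪α, δ⟫ * ⟪α, δ⟫ < (‖δ‖ * ‖α‖) * (‖δ‖ * ‖α‖) := by nlinarith
    rw [real_inner_self_eq_norm_mul_norm, real_inner_self_eq_norm_mul_norm]
    nlinarith
  have hmn : m * n ≤ 3 := by
    have h4 : (m:ℝ) * (n:ℝ) < 4 := by
      rw [← hm, ← hn, hpδα]
      rw [div_mul_div_comm]
      rw [div_lt_iff₀ (by positivity)]
      ring_nf
      nlinarith
    have : ((m * n : ℤ) : ℝ) < 4 := by push_cast; linarith
    have : (m * n : ℤ) < 4 := by exact_mod_cast this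
    omega
  -- in all cases α - δ ∈ R
  have hsubR : α - δ ∈ R := by
    rcases eq_or_lt_of_le hm1 with h | h
    · -- m = 1 : δ - α ∈ R, negate
      have h1 : δ - α ∈ R := by
        have := hmα; rw [← h] at this; simpa using this
      have := hRneg _ h1
      simpa [neg_sub] using this
    · -- m ≥ 2 forces n = 1
      have hn1' : n = 1 := by nlinarith
      have := hnδ; rw [hn1'] at this; simpa using this
  -- α - δ ∈ P
  have hsubP : α - δ ∈ P := by
    by_contra h
    have h2 := hPneg (α - δ) hsubR
    rw [neg_sub] at h2
    have hdmα : δ - α ∈ P := by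
      by_contra h3
      exact h (h2.mpr h3)
    have h4 := hmax (δ - α) hdmα
    have h5 : α + (δ - α) = δ := by abel
    rw [h5] at h4
    exact h4 hδR
  -- rule out m ≥ 2 : then 2α - δ ∈ R contradicting maximality
  have hmeq : m = 1 := by
    by_contra hne
    have hm2 : 2 ≤ m := by omega
    have hm3 : m ≤ 3 := by nlinarith
    have h2αδ : δ - (2:ℝ) • α ∈ R := by
      interval_cases m
      · exact_mod_cast hmα
      · -- m = 3 : reflect δ - α again
        have hδαR : δ - α ∈ R := by
          have := hRneg _ hsubR; simpa [neg_sub] using this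
        have key : 2 * ⟪δ - α, α⟫ / ⟪α, α⟫ = 1 := by
          rw [inner_sub_left]
          have : ⟪δ, α⟫ = 3 / 2 * ⟪α, α⟫ := by
            have : 2 * ⟪δ, α⟫ / ⟪α, α⟫ = (3:ℝ) := by exact_mod_cast hm
            field_simp at this ⊢; linarith
          rw [this]; field_simp; ring
        have := hRrefl α hαR (δ - α) hδαR
        rw [key, one_smul] at this
        have h6 : δ - α - α ∈ R := this
        have h7 : δ - (2:ℝ) • α = δ - α - α := by rw [two_smul]; abel
        rwa [h7]
    have := hmax (α - δ) hsubP
    have h2 : α + (α - δ) ∈ R := by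
      have := hRneg _ h2αδ
      have h3 : -(δ - (2:ℝ) • α) = α + (α - δ) := by rw [two_smul]; abel
      rwa [h3] at this
    exact this h2
  -- positivity of ⟪α, α - δ⟫
  have hpval : ⟪α, δ⟫ = ⟪α, α⟫ / 2 := by
    have : 2 * ⟪δ, α⟫ / ⟪α, α⟫ = (1:ℝ) := by rw [hm, hmeq]; norm_num
    rw [hpδα] at this
    field_simp at this; linarith
  refine Finset.mem_filter.mpr ⟨hsubP, ?_⟩
  rw [inner_sub_right, hpval]
  linarith
end

section
/- In Joyce's construction, let R_j⁺ = {γ ∈ Θ_{j-1} ∩ R⁺ : (α_j, γ) > 0} for j ≥ 1 (with R_1⁺ = {γ ∈ R⁺ : (α_1, γ) ≠ 0}). If α ∈ R_j⁺ and β ∈ R_l⁺ with l ≥ j and α + β is a root, then α + β ∈ R_j⁺. -/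
open scoped RealInnerProductSpace

/-- With Joyce's sets `R_j⁺` (`R_1⁺ = {γ ∈ R⁺ : (α_1,γ) ≠ 0}` and
`R_j⁺ = {γ ∈ Θ_{j-1} ∩ R⁺ : (α_j,γ) > 0}` for `j ≥ 2`), if `α ∈ R_j⁺`,
`β ∈ R_l⁺` with `l ≥ j` and `α + β` is a root, then `α + β ∈ R_j⁺`. -/
theorem stmt_10 (E : Type*) [NormedAddCommGroup E] [InnerProductSpace ℝ E]
    [DecidableEq E]
    (R : Finset E)
    (hR0 : (0 : E) ∉ R)
    (hRneg : ∀ β ∈ R, -β ∈ R)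
    (hRint : ∀ α ∈ R, ∀ β ∈ R, ∃ n : ℤ, 2 * ⟪β, α⟫ / ⟪α, α⟫ = (n : ℝ))
    (hRrefl : ∀ α ∈ R, ∀ β ∈ R, β - (2 * ⟪β, α⟫ / ⟪α, α⟫) • α ∈ R)
    (hRred : ∀ α ∈ R, ∀ t : ℝ, t • α ∈ R → t = 1 ∨ t = -1)
    (P : Finset E) (hPR : P ⊆ R)
    (hPneg : ∀ β ∈ R, (β ∈ P ↔ -β ∉ P))
    (hPadd : ∀ β ∈ P, ∀ γ ∈ P, β + γ ∈ R → β + γ ∈ P)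
    -- Joyce recursion data
    (d : ℕ) (α : ℕ → E) (Θ : ℕ → Finset E)
    (hΘ0 : Θ 0 = R)
    (hΘ : ∀ j, 1 ≤ j → j ≤ d →
      Θ j = (Θ (j - 1)).filter (fun γ => ⟪α j, γ⟫ = 0))
    (hαmem : ∀ j, 1 ≤ j → j ≤ d → α j ∈ Θ (j - 1) ∧ α j ∈ P)
    (hαmax : ∀ j, 1 ≤ j → j ≤ d → ∀ γ ∈ Θ (j - 1), γ ∈ P → α j + γ ∉ R)
    (Rp : ℕ → Finset E)
    (hRp1 : Rp 1 = P.filter (fun γ => ⟪α 1, γ⟫ ≠ 0))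
    (hRp : ∀ j, 2 ≤ j → j ≤ d →
      Rp j = ((Θ (j - 1)) ∩ P).filter (fun γ => 0 < ⟪α j, γ⟫))
    -- key facts from the construction
    (hhalf : ∀ j, 1 ≤ j → j ≤ d → ∀ γ ∈ Rp j, γ ≠ α j →
      2 * ⟪γ, α j⟫ / ⟪α j, α j⟫ = 1)
    (hso : ∀ i j, 1 ≤ i → i ≤ d → 1 ≤ j → j ≤ d → i ≠ j →
      α i + α j ∉ R ∧ α i + α j ≠ 0 ∧ α i - α j ∉ R ∧ α i - α j ≠ 0) :
    ∀ j l, 1 ≤ j → j ≤ l → l ≤ d →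
      ∀ a ∈ Rp j, ∀ b ∈ Rp l, a + b ∈ R → a + b ∈ Rp j := by
  -- Θ is a decreasing chain
  have hΘstep : ∀ k, 1 ≤ k → k ≤ d → Θ k ⊆ Θ (k - 1) := by
    intro k hk1 hkd
    rw [hΘ k hk1 hkd]
    exact Finset.filter_subset _ _
  have hΘmono : ∀ k l, k ≤ l → l ≤ d → Θ l ⊆ Θ k := by
    intro k l hkl
    induction l with
    | zero =>
      intro _
      have hk0 : k = 0 := Nat.le_zero.mp hkl
      subst hk0
      exact subset_rfl
    | succ m ih =>
      intro hld
      rcases Nat.eq_or_lt_of_le hkl with h | h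
      · subst h; exact subset_rfl
      · have h1 : k ≤ m := by omega
        have h2 : m ≤ d := by omega
        have := hΘstep (m + 1) (by omega) hld
        simp only [Nat.add_sub_cancel] at this
        exact this.trans (ih h1 h2)
  have hΘsubR : ∀ k, k ≤ d → Θ k ⊆ R := by
    intro k hk
    have := hΘmono 0 k (Nat.zero_le _) hk
    rwa [hΘ0] at this
  -- Θ k is closed under addition (within R)
  have hΘadd : ∀ k, k ≤ d → ∀ a ∈ Θ k, ∀ b ∈ Θ k, a + b ∈ R → a + b ∈ Θ k := by
    intro k
    induction k with
    | zero => intro _ a _ b _ hab; rwa [hΘ0]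
    | succ m ih =>
      intro hkd a ha b hb hab
      rw [hΘ (m + 1) (by omega) hkd] at ha hb ⊢
      simp only [Nat.add_sub_cancel, Finset.mem_filter] at ha hb ⊢
      refine ⟨ih (by omega) a ha.1 b hb.1 hab, ?_⟩
      rw [inner_add_right, ha.2, hb.2, add_zero]
  -- Rp j ⊆ P
  have hRpP : ∀ j, 1 ≤ j → j ≤ d → Rp j ⊆ P := by
    intro j hj1 hjd γ hγ
    rcases Nat.eq_or_lt_of_le hj1 with h | h
    · rw [← h, hRp1, Finset.mem_filter] at hγ; exact hγ.1
    · rw [hRp j h hjd, Finset.mem_filter, Finset.mem_inter] at hγ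
      exact hγ.1.2
  -- positivity of ⟪α j, γ⟫ on Rp j
  have hαne : ∀ j, 1 ≤ j → j ≤ d → (0:ℝ) < ⟪α j, α j⟫ := by
    intro j hj1 hjd
    have hmem : α j ∈ P := (hαmem j hj1 hjd).2
    have : α j ≠ 0 := by
      intro h; exact hR0 (h ▸ hPR hmem)
    have hne : ⟪α j, α j⟫ ≠ 0 := inner_self_ne_zero.2 this
    exact lt_of_le_of_ne real_inner_self_nonneg (Ne.symm hne)
  have hpos : ∀ j, 1 ≤ j → j ≤ d → ∀ γ ∈ Rp j, (0:ℝ) < ⟪α j, γ⟫ := by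
    intro j hj1 hjd γ hγ
    by_cases h : γ = α j
    · subst h; exact hαne j hj1 hjd
    · have := hhalf j hj1 hjd γ hγ h
      have hα := hαne j hj1 hjd
      have hγα : ⟪γ, α j⟫ = ⟪α j, α j⟫ / 2 := by
        field_simp at this
        linarith
      rw [real_inner_comm, hγα]
      linarith
  -- main proof
  intro j l hj1 hjl hld a ha b hb hab
  have hjd : j ≤ d := le_trans hjl hld
  have haP : a ∈ P := hRpP j hj1 hjd ha
  have hbP : b ∈ P := hRpP l (le_trans hj1 hjl) hld hb
  have habP : a + b ∈ P := hPadd a haP b hbP hab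
  -- inner product with α j
  have hbin : (0:ℝ) ≤ ⟪α j, b⟫ := by
    rcases Nat.eq_or_lt_of_le hjl with h | h
    · exact le_of_lt (hpos j hj1 hjd b (h.symm ▸ hb))
    · -- l > j, so b ∈ Θ (l-1) ⊆ Θ j, hence ⟪α j, b⟫ = 0
      have hl2 : 2 ≤ l := by omega
      have hbΘ : b ∈ Θ (l - 1) := by
        rw [hRp l hl2 hld, Finset.mem_filter, Finset.mem_inter] at hb
        exact hb.1.1
      have hbΘj : b ∈ Θ j := hΘmono j (l - 1) (by omega) (by omega) hbΘ
      rw [hΘ j hj1 hjd, Finset.mem_filter] at hbΘj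
      rw [hbΘj.2]
  have hin : (0:ℝ) < ⟪α j, a + b⟫ := by
    rw [inner_add_right]
    have := hpos j hj1 hjd a ha
    linarith
  rcases Nat.eq_or_lt_of_le hj1 with h | h
  · -- j = 1
    subst h
    rw [hRp1, Finset.mem_filter]
    exact ⟨habP, ne_of_gt hin⟩
  · -- j ≥ 2
    have hj2 : 2 ≤ j := h
    rw [hRp j hj2 hjd, Finset.mem_filter, Finset.mem_inter]
    have haΘ : a ∈ Θ (j - 1) := by
      rw [hRp j hj2 hjd, Finset.mem_filter, Finset.mem_inter] at ha
      exact ha.1.1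
    have hbΘ : b ∈ Θ (j - 1) := by
      rcases Nat.eq_or_lt_of_le hjl with hlj | hlj
      · rw [← hlj] at hb
        rw [hRp j hj2 hjd, Finset.mem_filter, Finset.mem_inter] at hb
        exact hb.1.1
      · have hl2 : 2 ≤ l := by omega
        have : b ∈ Θ (l - 1) := by
          rw [hRp l hl2 hld, Finset.mem_filter, Finset.mem_inter] at hb
          exact hb.1.1
        exact hΘmono (j - 1) (l - 1) (by omega) (by omega) this
    exact ⟨⟨hΘadd (j - 1) (by omega) a haΘ b hbΘ hab, habP⟩, hin⟩
end

section
/- Let R be a root system, {α_j} Joyce strongly orthogonal roots, and δ̂ = (1/2) Σ_{α ∈ R̂⁺} α where R̂⁺ = ∪_{j=1}^m R_j⁺. Then for each j ≤ m, (α_j, δ̂) = (1/2) Σ_{γ ∈ R_j⁺} (α_j, γ) = ((α_j,α_j)/4)(2 + #(R_j⁺) - 1), and in particular (α_j, δ̂) > 0. Moreover Σ_{γ ∈ R_k⁺} (α_j, γ) = 0 for all k < j. -/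
open scoped RealInnerProductSpace

/-- With `δ̂ = (1/2) Σ_{α ∈ R̂⁺} α`, `R̂⁺ = ∪_{j=1}^m R_j⁺`, for each
`j ≤ m` one has `(α_j, δ̂) = (1/2) Σ_{γ ∈ R_j⁺} (α_j,γ) = ((α_j,α_j)/4)(2 + #R_j⁺ - 1)`,
which is positive, and `Σ_{γ ∈ R_k⁺} (α_j,γ) = 0` for `k < j`. -/
theorem stmt_15 (E : Type*) [NormedAddCommGroup E] [InnerProductSpace ℝ E]
    [DecidableEq E]
    (R : Finset E)
    (hR0 : (0 : E) ∉ R)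
    (hRneg : ∀ β ∈ R, -β ∈ R)
    (P : Finset E) (hPR : P ⊆ R)
    (hPneg : ∀ β ∈ R, (β ∈ P ↔ -β ∉ P))
    (hPadd : ∀ β ∈ P, ∀ γ ∈ P, β + γ ∈ R → β + γ ∈ P)
    -- Joyce data: strongly orthogonal roots `α j` and layers `Rp j`, `j = 1, …, m`
    (m : ℕ) (α : ℕ → E) (Rp : ℕ → Finset E)
    (hRpP : ∀ j, 1 ≤ j → j ≤ m → Rp j ⊆ P)
    (hαmem : ∀ j, 1 ≤ j → j ≤ m → α j ∈ Rp j)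
    (hαnorm : ∀ j, 1 ≤ j → j ≤ m → 0 < ⟪α j, α j⟫)
    (hso : ∀ i j, 1 ≤ i → i ≤ m → 1 ≤ j → j ≤ m → i ≠ j → ⟪α i, α j⟫ = 0)
    (hdisj : ∀ i j, 1 ≤ i → i ≤ m → 1 ≤ j → j ≤ m → i ≠ j →
      Disjoint (Rp i) (Rp j))
    (hhalf : ∀ j, 1 ≤ j → j ≤ m → ∀ γ ∈ Rp j, γ ≠ α j →
      ⟪α j, γ⟫ = ⟪α j, α j⟫ / 2)
    (hinv : ∀ k, 1 ≤ k → k ≤ m → ∀ γ ∈ Rp k, γ ≠ α k → α k - γ ∈ Rp k)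
    (horth : ∀ j k, 1 ≤ k → k < j → j ≤ m → ∀ γ ∈ Rp k, ⟪α j, α k - γ⟫ = -⟪α j, γ⟫)
    (δhat : E)
    (hδhat : δhat = (1/2 : ℝ) • ∑ γ ∈ (Finset.Icc 1 m).biUnion Rp, γ) :
    ∀ j, 1 ≤ j → j ≤ m →
      (⟪α j, δhat⟫ = (1/2 : ℝ) * ∑ γ ∈ Rp j, ⟪α j, γ⟫) ∧
      (⟪α j, δhat⟫ = (⟪α j, α j⟫ / 4) * (2 + ((Rp j).card : ℝ) - 1)) ∧
      0 < ⟪α j, δhat⟫ ∧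
      (∀ k, 1 ≤ k → k < j → ∑ γ ∈ Rp k, ⟪α j, γ⟫ = 0) := by

  intro j hj1 hjm
  have hαj := hαmem j hj1 hjm
  -- for k ≠ j the sum vanishes
  have key : ∀ k, 1 ≤ k → k ≤ m → k ≠ j → ∑ γ ∈ Rp k, ⟪α j, γ⟫ = 0 := by
    intro k hk1 hkm hkj
    have hαk := hαmem k hk1 hkm
    have hjk : ⟪α j, α k⟫ = 0 := hso j k hj1 hjm hk1 hkm (Ne.symm hkj)
    rw [← Finset.sum_erase_add _ _ hαk, hjk, add_zero]
    refine Finset.sum_involution (fun γ _ => α k - γ) ?_ ?_ ?_ ?_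
    · intro γ hγ
      rw [inner_sub_right, hjk]
      ring
    · intro γ hγ hne heq
      apply hne
      have h2 : ⟪α j, γ⟫ + ⟪α j, α k - γ⟫ = 0 := by
        rw [inner_sub_right, hjk]; ring
      have heq' : α k - γ = γ := heq
      rw [heq'] at h2
      linarith
    · intro γ hγ
      rw [Finset.mem_erase] at hγ ⊢
      refine ⟨?_, hinv k hk1 hkm γ hγ.2 hγ.1⟩
      intro h
      have hγ0 : γ ≠ 0 := by
        intro h0
        exact hR0 (h0 ▸ hPR (hRpP k hk1 hkm hγ.2))
      apply hγ0
      have := sub_eq_self.mp h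
      exact this
    · intro γ hγ
      simp
  -- sum over Rp j
  have hcard : 1 ≤ (Rp j).card := Finset.card_pos.mpr ⟨α j, hαj⟩
  have hsumj : ∑ γ ∈ Rp j, ⟪α j, γ⟫
      = ⟪α j, α j⟫ / 2 * ((Rp j).card - 1) + ⟪α j, α j⟫ := by
    rw [← Finset.sum_erase_add _ _ hαj]
    have hconst : ∀ γ ∈ (Rp j).erase (α j), ⟪α j, γ⟫ = ⟪α j, α j⟫ / 2 := by
      intro γ hγ
      rw [Finset.mem_erase] at hγ
      exact hhalf j hj1 hjm γ hγ.2 hγ.1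
    rw [Finset.sum_congr rfl hconst, Finset.sum_const,
      Finset.card_erase_of_mem hαj, nsmul_eq_mul, Nat.cast_sub hcard]
    push_cast
    ring
  -- inner with δhat
  have h1 : ⟪α j, δhat⟫ = (1/2 : ℝ) * ∑ γ ∈ Rp j, ⟪α j, γ⟫ := by
    rw [hδhat, real_inner_smul_right, inner_sum]
    congr 1
    rw [Finset.sum_biUnion]
    · rw [← Finset.sum_erase_add _ _ (Finset.mem_Icc.mpr ⟨hj1, hjm⟩)]
      rw [Finset.sum_eq_zero, zero_add]
      intro k hk
      rw [Finset.mem_erase, Finset.mem_Icc] at hk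
      exact key k hk.2.1 hk.2.2 hk.1
    · intro a ha b hb hab
      rw [Finset.mem_coe, Finset.mem_Icc] at ha hb
      exact hdisj a b ha.1 ha.2 hb.1 hb.2 hab
  have h2 : ⟪α j, δhat⟫ = (⟪α j, α j⟫ / 4) * (2 + ((Rp j).card : ℝ) - 1) := by
    rw [h1, hsumj]; ring
  refine ⟨h1, h2, ?_, ?_⟩
  · rw [h2]
    have hc : (1 : ℝ) ≤ ((Rp j).card : ℝ) := by exact_mod_cast hcard
    have := hαnorm j hj1 hjm
    have h4 : 0 < ⟪α j, α j⟫ / 4 := by linarith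
    nlinarith
  · intro k hk1 hkj
    exact key k hk1 (le_of_lt (lt_of_lt_of_le hkj hjm)) (Nat.ne_of_lt hkj)
end
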